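/- Assume k := 2 f''(1) + 6 f'(1) ≠ 0. Let 0 < c₀ < c_s and let ξ : (c₀, c_s) → (0,1) be differentiable and satisfy, for every c ∈ (c₀, c_s): N_c(ξ(c)) = 0, ∂_x N_c(ξ(c)) ≠ 0, and ξ(c) → 0 as c → c_s⁻. Then ξ'(c) → 6 c_s / k as c → c_s⁻. -/

import Mathlib

open Real MeasureTheory Filter Topology

/-- Limit of the derivative of the first zero: `ξ'(c) → 6c_s/k` as `c → c_s⁻`. -/
theorem stmt_15 (f : ℝ → ℝ) (U : Set ℝ) (hU : IsOpen U) (hUIcc : Set.Icc (0:ℝ) 1 ⊆ U)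
    (hf : ContDiffOn ℝ 3 f U) (hf1 : f 1 = 0) (hf'1 : deriv f 1 < 0)
    (cs k : ℝ) (hcs : cs = Real.sqrt (-(2 * deriv f 1)))
    (hk : k = 2 * deriv (deriv f) 1 + 6 * deriv f 1) (hk0 : k ≠ 0)
    (F : ℝ → ℝ) (hF : ∀ r, F r = ∫ ρ in r..1, f ρ)
    (c₀ : ℝ) (hc₀ : 0 < c₀) (hc₀cs : c₀ < cs)
    (ξ : ℝ → ℝ)
    (hξmem : ∀ c ∈ Set.Ioo c₀ cs, ξ c ∈ Set.Ioo (0:ℝ) 1)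
    (hξdiff : ∀ c ∈ Set.Ioo c₀ cs, DifferentiableAt ℝ ξ c)
    (hzero : ∀ c ∈ Set.Ioo c₀ cs,
      c ^ 2 * (ξ c) ^ 2 - 4 * (1 - ξ c) * F (1 - ξ c) = 0)
    (hdN : ∀ c ∈ Set.Ioo c₀ cs,
      deriv (fun x => c ^ 2 * x ^ 2 - 4 * (1 - x) * F (1 - x)) (ξ c) ≠ 0)
    (hξ0 : Tendsto ξ (𝓝[<] cs) (𝓝 0)) :
    Tendsto (fun c => deriv ξ c) (𝓝[<] cs) (𝓝 (6 * cs / k)) := by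
  -- an open interval neighbourhood of [0,1] inside U
  obtain ⟨ε, hε, hIU⟩ : ∃ ε > 0, Set.Ioo (-ε) (1+ε) ⊆ U := by
    obtain ⟨ε, hε, hsub⟩ :=
      (isCompact_Icc (a := (0:ℝ)) (b := 1)).exists_thickening_subset_open hU hUIcc
    refine ⟨ε, hε, fun y hy => hsub ?_⟩
    rw [Metric.mem_thickening_iff]
    refine ⟨max 0 (min 1 y), ⟨le_max_left _ _, max_le zero_le_one (min_le_left _ _)⟩, ?_⟩
    rw [Real.dist_eq, abs_lt]
    obtain ⟨h1, h2⟩ := hy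
    rcases le_total y 0 with h | h <;> rcases le_total (1:ℝ) y with h' | h' <;>
      constructor <;>
      simp [min_eq_right, min_eq_left, max_eq_left, max_eq_right, *] <;> nlinarith
  have hI01 : Set.Ioo (0:ℝ) 1 ⊆ Set.Ioo (-ε) (1+ε) :=
    Set.Ioo_subset_Ioo (by linarith) (by linarith)
  have hmem1 : (1:ℝ) ∈ Set.Ioo (-ε) (1+ε) := ⟨by linarith, by linarith⟩
  have h1U : (1:ℝ) ∈ U := hUIcc ⟨zero_le_one, le_refl 1⟩
  have hfc : ContinuousOn f U := hf.continuousOn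
  -- derivative of F
  have hFd : ∀ r ∈ Set.Ioo (-ε) (1+ε), HasDerivAt F (-(f r)) r := by
    intro r hr
    have hint : IntervalIntegrable f volume r 1 := by
      apply ContinuousOn.intervalIntegrable
      exact hfc.mono (fun y hy => hIU (Set.ordConnected_Ioo.uIcc_subset hr hmem1 hy))
    have hmeas : StronglyMeasurableAtFilter f (𝓝 r) volume :=
      hfc.stronglyMeasurableAtFilter hU r (hIU hr)
    have hcont : ContinuousAt f r := hfc.continuousAt (hU.mem_nhds (hIU hr))
    have := intervalIntegral.integral_hasDerivAt_left hint hmeas hcont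
    have hFe : F = fun u => ∫ x in u..1, f x := funext hF
    rw [hFe]; exact this
  -- derivatives of f
  have hdf2 : ContDiffOn ℝ 2 (deriv f) U := hf.deriv_of_isOpen hU (by norm_num)
  have hfd : ∀ r ∈ U, HasDerivAt f (deriv f r) r := fun r hr =>
    ((hf.differentiableOn (by norm_num)).differentiableAt (hU.mem_nhds hr)).hasDerivAt
  have hf'd : ∀ r ∈ U, HasDerivAt (deriv f) (deriv (deriv f) r) r := fun r hr =>
    ((hdf2.differentiableOn (by norm_num)).differentiableAt (hU.mem_nhds hr)).hasDerivAt
  have hf'c : ContinuousOn (deriv f) U := hdf2.continuousOn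
  have hf''c : ContinuousOn (deriv (deriv f)) U :=
    (hdf2.deriv_of_isOpen hU (m := 1) (by norm_num)).continuousOn
  -- compositions with 1 - x
  have hone : ∀ x : ℝ, HasDerivAt (fun y : ℝ => 1 - y) (-1) x := fun x => by
    simpa using (hasDerivAt_id x).const_sub 1
  have hFcomp : ∀ x ∈ Set.Ioo (0:ℝ) 1, HasDerivAt (fun y => F (1-y)) (f (1-x)) x := by
    intro x hx
    have h1x : (1-x) ∈ Set.Ioo (-ε) (1+ε) := hI01 ⟨by linarith [hx.1, hx.2], by linarith [hx.1]⟩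
    exact ((hFd _ h1x).comp x (hone x)).congr_deriv (by ring)
  have hfcomp : ∀ x ∈ Set.Ioo (0:ℝ) 1,
      HasDerivAt (fun y => f (1-y)) (-(deriv f (1-x))) x := by
    intro x hx
    have h1x : (1-x) ∈ U := hUIcc ⟨by linarith [hx.2], by linarith [hx.1]⟩
    exact ((hfd _ h1x).comp x (hone x)).congr_deriv (by ring)
  have hf'comp : ∀ x ∈ Set.Ioo (0:ℝ) 1,
      HasDerivAt (fun y => deriv f (1-y)) (-(deriv (deriv f) (1-x))) x := by
    intro x hx
    have h1x : (1-x) ∈ U := hUIcc ⟨by linarith [hx.2], by linarith [hx.1]⟩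
    exact ((hf'd _ h1x).comp x (hone x)).congr_deriv (by ring)
  -- the key auxiliary functions
  set H : ℝ → ℝ := fun x => (8 - 4*x) * F (1-x) - 4*x*(1-x) * f (1-x) with hHdef
  set H1 : ℝ → ℝ := fun x => -4 * F (1-x) + (4+4*x) * f (1-x) + (4*x-4*x^2) * deriv f (1-x)
    with hH1def
  set H2 : ℝ → ℝ := fun x => -12*x * deriv f (1-x) - (4*x-4*x^2) * deriv (deriv f) (1-x)
    with hH2def
  have hHs : ∀ x ∈ Set.Ioo (0:ℝ) 1, HasDerivAt H (H1 x) x := by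
    intro x hx
    have t1 : HasDerivAt (fun y : ℝ => (8 - 4*y) * F (1-y))
        ((-4) * F (1-x) + (8-4*x) * f (1-x)) x := by
      have h8 : HasDerivAt (fun y : ℝ => 8 - 4*y) (-4) x := by
        simpa using ((hasDerivAt_id x).const_mul 4).const_sub 8
      exact h8.mul (hFcomp x hx)
    have t2 : HasDerivAt (fun y : ℝ => 4*y*(1-y) * f (1-y))
        ((4*1*(1-x) + 4*x*(-1)) * f (1-x) + 4*x*(1-x) * (-(deriv f (1-x)))) x := by
      have hg : HasDerivAt (fun y : ℝ => 4*y*(1-y)) (4*1*(1-x) + 4*x*(-1)) x :=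
        (((hasDerivAt_id x).const_mul 4).mul ((hasDerivAt_id x).const_sub 1))
      exact hg.mul (hfcomp x hx)
    rw [hHdef, hH1def]
    exact (t1.sub t2).congr_deriv (by ring)
  have hH1s : ∀ x ∈ Set.Ioo (0:ℝ) 1, HasDerivAt H1 (H2 x) x := by
    intro x hx
    have t1 : HasDerivAt (fun y : ℝ => -4 * F (1-y)) (-4 * f (1-x)) x :=
      (hFcomp x hx).const_mul (-4)
    have t2 : HasDerivAt (fun y : ℝ => (4+4*y) * f (1-y))
        (4 * f (1-x) + (4+4*x) * (-(deriv f (1-x)))) x := by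
      have h4 : HasDerivAt (fun y : ℝ => 4 + 4*y) 4 x := by
        simpa using ((hasDerivAt_id x).const_mul 4).const_add 4
      exact h4.mul (hfcomp x hx)
    have t3 : HasDerivAt (fun y : ℝ => (4*y-4*y^2) * deriv f (1-y))
        ((4 - 4*(2*x)) * deriv f (1-x) + (4*x-4*x^2) * (-(deriv (deriv f) (1-x)))) x := by
      have hg : HasDerivAt (fun y : ℝ => 4*y-4*y^2) (4 - 4*(2*x)) x := by
        have := ((hasDerivAt_id x).const_mul 4).sub ((hasDerivAt_pow 2 x).const_mul 4)
        exact this.congr_deriv (by ring)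
      exact hg.mul (hf'comp x hx)
    rw [hH1def, hH2def]
    exact ((t1.add t2).add t3).congr_deriv (by ring)
  -- value and continuity facts at the endpoint
  have hF1 : F 1 = 0 := by rw [hF]; simp
  have hsub0 : ∀ g : ℝ → ℝ, ContinuousAt g 1 → ContinuousAt (fun y : ℝ => g (1-y)) 0 := by
    intro g hg
    have h2 : ContinuousAt (fun y : ℝ => 1 - y) 0 := by fun_prop
    have : ContinuousAt g ((fun y : ℝ => 1 - y) 0) := by simpa using hg
    exact this.comp h2
  have hFcont : ContinuousAt (fun y : ℝ => F (1-y)) 0 :=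
    hsub0 F (hFd 1 hmem1).continuousAt
  have hfcont : ContinuousAt (fun y : ℝ => f (1-y)) 0 :=
    hsub0 f (hfc.continuousAt (hU.mem_nhds h1U))
  have hf'cont : ContinuousAt (fun y : ℝ => deriv f (1-y)) 0 :=
    hsub0 (deriv f) (hf'c.continuousAt (hU.mem_nhds h1U))
  have hf''cont : ContinuousAt (fun y : ℝ => deriv (deriv f) (1-y)) 0 :=
    hsub0 (deriv (deriv f)) (hf''c.continuousAt (hU.mem_nhds h1U))
  have hHtend : Tendsto H (𝓝[>] (0:ℝ)) (𝓝 0) := by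
    have hc : ContinuousAt H 0 := by
      rw [hHdef]
      exact (ContinuousAt.mul (by fun_prop) hFcont).sub
        (ContinuousAt.mul (by fun_prop) hfcont)
    have := hc.tendsto.mono_left (nhdsWithin_le_nhds : 𝓝[>] (0:ℝ) ≤ 𝓝 0)
    have hval : H 0 = 0 := by rw [hHdef]; simp [hF1]
    rw [hval] at this
    exact this
  have hH1tend : Tendsto H1 (𝓝[>] (0:ℝ)) (𝓝 0) := by
    have hc : ContinuousAt H1 0 := by
      rw [hH1def]
      exact ((ContinuousAt.mul (by fun_prop) hFcont).add
        (ContinuousAt.mul (by fun_prop) hfcont)).add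
        (ContinuousAt.mul (by fun_prop) hf'cont)
    have := hc.tendsto.mono_left (nhdsWithin_le_nhds : 𝓝[>] (0:ℝ) ≤ 𝓝 0)
    have hval : H1 0 = 0 := by rw [hH1def]; simp [hF1, hf1]
    rw [hval] at this
    exact this
  -- the main limit via two applications of l'Hôpital
  have hmain : Tendsto (fun x => H x / x^3) (𝓝[>] (0:ℝ)) (𝓝 (-k/3)) := by
    have hdiv2 : Tendsto (fun x => H2 x / (6*x)) (𝓝[>] (0:ℝ)) (𝓝 (-k/3)) := by
      have heq : ∀ᶠ x in 𝓝[>] (0:ℝ), (-12 * deriv f (1-x) - (4-4*x) * deriv (deriv f) (1-x))/6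
          = H2 x / (6*x) := by
        filter_upwards [self_mem_nhdsWithin] with x hx
        have hx0 : x ≠ 0 := ne_of_gt hx
        rw [hH2def]
        field_simp
      have hφ : Tendsto (fun x => (-12 * deriv f (1-x) - (4-4*x) * deriv (deriv f) (1-x))/6)
          (𝓝[>] (0:ℝ)) (𝓝 (-k/3)) := by
        have hc : ContinuousAt
            (fun x : ℝ => (-12 * deriv f (1-x) - (4-4*x) * deriv (deriv f) (1-x))/6) 0 :=
          (((continuousAt_const.mul hf'cont).sub
            (ContinuousAt.mul (by fun_prop) hf''cont)).div_const 6)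
        have := hc.tendsto.mono_left (nhdsWithin_le_nhds : 𝓝[>] (0:ℝ) ≤ 𝓝 0)
        have hval : (-12 * deriv f (1-(0:ℝ)) - (4-4*(0:ℝ)) * deriv (deriv f) (1-(0:ℝ)))/6
            = -k/3 := by
          rw [hk]; simp only [mul_zero, sub_zero]; ring
        rw [hval] at this
        exact this
      exact hφ.congr' heq
    have hsq : ∀ x ∈ Set.Ioo (0:ℝ) 1, HasDerivAt (fun y : ℝ => 3*y^2) (6*x) x := by
      intro x _
      have h := (hasDerivAt_pow 2 x).const_mul (3:ℝ)
      exact h.congr_deriv (by ring)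
    have hcb : ∀ x ∈ Set.Ioo (0:ℝ) 1, HasDerivAt (fun y : ℝ => y^3) (3*x^2) x :=
      fun x _ => by simpa using hasDerivAt_pow 3 x
    have htend2 : Tendsto (fun x : ℝ => 3*x^2) (𝓝[>] (0:ℝ)) (𝓝 0) := by
      have : Tendsto (fun x : ℝ => 3*x^2) (𝓝 0) (𝓝 0) := by
        have := (continuous_const.mul (continuous_pow 2) : Continuous fun x:ℝ => 3*x^2).tendsto (0:ℝ)
        convert this using 2 <;> simp
      exact this.mono_left nhdsWithin_le_nhds
    have htend3 : Tendsto (fun x : ℝ => x^3) (𝓝[>] (0:ℝ)) (𝓝 0) := by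
      have : Tendsto (fun x : ℝ => x^3) (𝓝 0) (𝓝 0) := by
        simpa using (continuous_pow 3).tendsto (0:ℝ)
      exact this.mono_left nhdsWithin_le_nhds
    have hdiv1 : Tendsto (fun x => H1 x / (3*x^2)) (𝓝[>] (0:ℝ)) (𝓝 (-k/3)) :=
      HasDerivAt.lhopital_zero_right_on_Ioo one_pos hH1s hsq
        (fun x hx => by have h0 := hx.1; positivity) hH1tend htend2 hdiv2
    exact HasDerivAt.lhopital_zero_right_on_Ioo one_pos hHs hcb
      (fun x hx => by have h0 := hx.1; positivity) hHtend htend3 hdiv1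
  -- pointwise formula for deriv ξ
  have key : ∀ c ∈ Set.Ioo c₀ cs, deriv ξ c = -(2*c) / (H (ξ c) / (ξ c)^3) := by
    intro c hc
    obtain ⟨hx0, hx1⟩ := hξmem c hc
    have hxI : ξ c ∈ Set.Ioo (0:ℝ) 1 := ⟨hx0, hx1⟩
    have hDval : HasDerivAt (fun x => c ^ 2 * x ^ 2 - 4 * (1 - x) * F (1 - x))
        (2*c^2*(ξ c) + 4*F (1-ξ c) - 4*(1-ξ c)*f (1-ξ c)) (ξ c) := by
      have h1 : HasDerivAt (fun x : ℝ => c^2 * x^2) (c^2 * (2*(ξ c))) (ξ c) := by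
        simpa using (hasDerivAt_pow 2 (ξ c)).const_mul (c^2)
      have h2 : HasDerivAt (fun x : ℝ => 4 * (1-x) * F (1-x))
          ((4*(-1)) * F (1-ξ c) + 4*(1-ξ c) * f (1-ξ c)) (ξ c) := by
        have hg : HasDerivAt (fun x : ℝ => 4 * (1-x)) (4*(-1)) (ξ c) :=
          (hone (ξ c)).const_mul 4
        exact hg.mul (hFcomp (ξ c) hxI)
      exact (h1.sub h2).congr_deriv (by ring)
    set D := 2*c^2*(ξ c) + 4*F (1-ξ c) - 4*(1-ξ c)*f (1-ξ c) with hDdef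
    have hDne : D ≠ 0 := by
      have := hdN c hc
      rwa [hDval.deriv] at this
    have hxi := (hξdiff c hc).hasDerivAt
    have hPhi : HasDerivAt (fun c' => c' ^ 2 * (ξ c') ^ 2 - 4 * (1 - ξ c') * F (1 - ξ c'))
        (2*c*(ξ c)^2 + deriv ξ c * D) c := by
      have hx2 : HasDerivAt (fun c' => (ξ c')^2) (2 * ξ c * deriv ξ c) c := by
        have := (hasDerivAt_pow 2 (ξ c)).comp c hxi
        exact this.congr_deriv (by ring)
      have t1 : HasDerivAt (fun c' => c' ^ 2 * (ξ c') ^ 2)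
          (2*c * (ξ c)^2 + c^2 * (2 * ξ c * deriv ξ c)) c := by
        have hcsq : HasDerivAt (fun c' : ℝ => c'^2) (2*c) c := by
          simpa using hasDerivAt_pow 2 c
        exact hcsq.mul hx2
      have hxd : HasDerivAt (fun c' => 1 - ξ c') (-(deriv ξ c)) c := by
        simpa using (hxi.const_sub 1)
      have hFch : HasDerivAt (fun c' => F (1 - ξ c')) (-(f (1 - ξ c)) * (-(deriv ξ c))) c := by
        have h1x : (1 - ξ c) ∈ Set.Ioo (-ε) (1+ε) := hI01 ⟨by linarith, by linarith⟩
        exact (hFd _ h1x).comp c hxd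
      have t2 : HasDerivAt (fun c' => 4 * (1 - ξ c') * F (1 - ξ c'))
          ((4 * (-(deriv ξ c))) * F (1 - ξ c)
            + 4 * (1 - ξ c) * (-(f (1 - ξ c)) * (-(deriv ξ c)))) c := by
        have hg : HasDerivAt (fun c' => 4 * (1 - ξ c')) (4 * (-(deriv ξ c))) c :=
          hxd.const_mul 4
        exact hg.mul hFch
      have := t1.sub t2
      exact this.congr_deriv (by rw [hDdef]; ring)
    have hPhi0 : HasDerivAt (fun c' => c' ^ 2 * (ξ c') ^ 2 - 4 * (1 - ξ c') * F (1 - ξ c'))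
        0 c := by
      have hev : (fun c' => c' ^ 2 * (ξ c') ^ 2 - 4 * (1 - ξ c') * F (1 - ξ c'))
          =ᶠ[𝓝 c] (fun _ => (0:ℝ)) := by
        filter_upwards [isOpen_Ioo.mem_nhds hc] with y hy using hzero y hy
      exact (hasDerivAt_const c (0:ℝ)).congr_of_eventuallyEq hev
    have heq : 2*c*(ξ c)^2 + deriv ξ c * D = 0 := hPhi.unique hPhi0
    have hxz : (ξ c) ≠ 0 := ne_of_gt hx0
    have hzc := hzero c hc
    have hxD : ξ c * D = H (ξ c) := by
      rw [hHdef, hDdef]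
      linear_combination 2 * hzc
    have hHne : H (ξ c) ≠ 0 := by
      rw [← hxD]; exact mul_ne_zero hxz hDne
    rw [div_div_eq_mul_div, eq_div_iff hHne, ← hxD]
    linear_combination (ξ c) * heq
  -- putting everything together
  have hIoo_mem : Set.Ioo c₀ cs ∈ 𝓝[<] cs :=
    Ioo_mem_nhdsLT hc₀cs
  have hxis : Tendsto ξ (𝓝[<] cs) (𝓝[>] (0:ℝ)) := by
    rw [tendsto_nhdsWithin_iff]
    exact ⟨hξ0, by filter_upwards [hIoo_mem] with c hc using (hξmem c hc).1⟩
  have hcomp2 : Tendsto (fun c => H (ξ c) / (ξ c)^3) (𝓝[<] cs) (𝓝 (-k/3)) := hmain.comp hxis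
  have hnum : Tendsto (fun c : ℝ => -(2*c)) (𝓝[<] cs) (𝓝 (-(2*cs))) := by
    have : Continuous (fun c : ℝ => -(2*c)) := by fun_prop
    exact (this.tendsto cs).mono_left nhdsWithin_le_nhds
  have hk3 : -k/3 ≠ (0:ℝ) := div_ne_zero (neg_ne_zero.mpr hk0) (by norm_num)
  have hlim := hnum.div hcomp2 hk3
  have hval : -(2*cs) / (-k/3) = 6*cs/k := by
    field_simp
    ring
  rw [hval] at hlim
  exact hlim.congr' (by filter_upwards [hIoo_mem] with c hc using (key c hc).symm)
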